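/- Let Λ_{2,0} ⊂ Λ_{1,0} be nested lattices and for scale factors ω_1, ω_2 > 0 with Λ_2 = ω_2 Λ_{2,0} ⊂ Λ_1 = ω_1 Λ_{1,0} still nested, let C = ∪_{λ ∈ V_{Λ_2}(0) ∩ Λ_1} V_{Λ_1}(λ). Then G(C) → G_{Λ_2} as ω_2/ω_1 → ∞, where G denotes the normalized second moment. -/

import Mathlib

open MeasureTheory Filter Pointwise

/-- Normalized second moment `G(S) = (∫_S ‖x‖² dx)/(n·ν(S)^{1+2/n})`. -/
noncomputable def nsm (n : ℕ) (S : Set (EuclideanSpace ℝ (Fin n))) : ℝ :=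
  (∫ x in S, ‖x‖ ^ 2) / (n * (volume S).toReal ^ ((1 : ℝ) + 2 / n))

/-- The lattice generated by a basis `B`: all integer linear combinations of the rows. -/
def latticeOf (n : ℕ) (B : Module.Basis (Fin n) ℝ (EuclideanSpace ℝ (Fin n))) :
    Set (EuclideanSpace ℝ (Fin n)) :=
  Set.range fun c : Fin n → ℤ => ∑ i, (c i : ℝ) • B i

/-- The (closed) Voronoi region of the origin for a set of lattice points `L`. -/
def cVor (n : ℕ) (L : Set (EuclideanSpace ℝ (Fin n))) : Set (EuclideanSpace ℝ (Fin n)) :=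
  {x | ∀ l ∈ L, ‖x‖ ≤ ‖x - l‖}

section Aux

open Set Metric
open scoped RealInnerProductSpace

variable {n : ℕ}

lemma norm_le_norm_sub_iff (x l : EuclideanSpace ℝ (Fin n)) :
    ‖x‖ ≤ ‖x - l‖ ↔ ⟪x, l⟫ ≤ ‖l‖ ^ 2 / 2 := by
  rw [← pow_le_pow_iff_left₀ (norm_nonneg x) (norm_nonneg _) (two_ne_zero),
    @norm_sub_sq_real]
  constructor <;> intro h <;> nlinarith

lemma convex_cVor {L : Set (EuclideanSpace ℝ (Fin n))} : Convex ℝ (cVor n L) := by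
  have h : cVor n L = ⋂ l ∈ L, {x : EuclideanSpace ℝ (Fin n) | ⟪x, l⟫ ≤ ‖l‖ ^ 2 / 2} := by
    ext x
    simp only [cVor, Set.mem_setOf_eq, Set.mem_iInter]
    exact forall₂_congr fun l _ => norm_le_norm_sub_iff x l
  rw [h]
  exact convex_iInter fun l => convex_iInter fun _ =>
    convex_halfSpace_le ⟨fun a b => inner_add_left a b l, fun c a => real_inner_smul_left a l c⟩ _

lemma isClosed_cVor {L : Set (EuclideanSpace ℝ (Fin n))} : IsClosed (cVor n L) := by
  have h : cVor n L = ⋂ l ∈ L, {x : EuclideanSpace ℝ (Fin n) | ‖x‖ ≤ ‖x - l‖} := by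
    ext x; simp [cVor]
  rw [h]
  exact isClosed_biInter fun l _ => isClosed_le (by fun_prop) (by fun_prop)

lemma zero_mem_cVor {L : Set (EuclideanSpace ℝ (Fin n))} :
    (0 : EuclideanSpace ℝ (Fin n)) ∈ cVor n L := by
  intro l hl; simp

lemma smul_cVor {L : Set (EuclideanSpace ℝ (Fin n))} {a : ℝ} (ha : 0 < a) :
    cVor n (a • L) = a • cVor n L := by
  ext x
  constructor
  · intro hx
    refine ⟨a⁻¹ • x, fun l hl => ?_, smul_inv_smul₀ ha.ne' x⟩
    have h := hx (a • l) (smul_mem_smul_set hl)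
    have he : a⁻¹ • x - l = a⁻¹ • (x - a • l) := by
      rw [smul_sub, smul_smul, inv_mul_cancel₀ ha.ne', one_smul]
    rw [he, norm_smul, norm_smul, norm_inv, Real.norm_eq_abs, abs_of_pos ha]
    exact mul_le_mul_of_nonneg_left h (inv_nonneg.2 ha.le)
  · rintro ⟨y, hy, rfl⟩ l ⟨m, hm, rfl⟩
    have h := hy m hm
    have he : a • y - a • m = a • (y - m) := (smul_sub a y m).symm
    rw [he, norm_smul, norm_smul, Real.norm_eq_abs, abs_of_pos ha]
    exact mul_le_mul_of_nonneg_left h ha.le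

variable (B : Module.Basis (Fin n) ℝ (EuclideanSpace ℝ (Fin n)))

lemma zero_mem_latticeOf : (0 : EuclideanSpace ℝ (Fin n)) ∈ latticeOf n B :=
  ⟨0, by simp⟩

lemma add_mem_latticeOf {x y : EuclideanSpace ℝ (Fin n)} (hx : x ∈ latticeOf n B)
    (hy : y ∈ latticeOf n B) : x + y ∈ latticeOf n B := by
  obtain ⟨c, rfl⟩ := hx; obtain ⟨d, rfl⟩ := hy
  refine ⟨c + d, ?_⟩
  rw [← Finset.sum_add_distrib]
  refine Finset.sum_congr rfl fun i _ => ?_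
  simp only [Pi.add_apply]
  push_cast
  rw [add_smul]

lemma countable_latticeOf : (latticeOf n B).Countable := Set.countable_range _

lemma equivFun_latticeOf {c : Fin n → ℤ} :
    B.equivFun (∑ i, (c i : ℝ) • B i) = fun i => (c i : ℝ) := by
  have : (∑ i, (c i : ℝ) • B i) = B.equivFun.symm (fun i => (c i : ℝ)) := by
    rw [Module.Basis.equivFun_symm_apply]
  rw [this, LinearEquiv.apply_symm_apply]

lemma exists_equivFun_bound :
    ∃ K > 0, ∀ x : EuclideanSpace ℝ (Fin n), ‖B.equivFun x‖ ≤ K * ‖x‖ := by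
  let G := LinearMap.toContinuousLinearMap (B.equivFun : EuclideanSpace ℝ (Fin n) →ₗ[ℝ] (Fin n → ℝ))
  refine ⟨max ‖G‖ 1, lt_of_lt_of_le one_pos (le_max_right _ _), fun x => ?_⟩
  calc ‖B.equivFun x‖ = ‖G x‖ := rfl
    _ ≤ ‖G‖ * ‖x‖ := G.le_opNorm x
    _ ≤ max ‖G‖ 1 * ‖x‖ := mul_le_mul_of_nonneg_right (le_max_left _ _) (norm_nonneg x)

lemma latticeOf_min_dist : ∃ d > 0, ∀ l ∈ latticeOf n B, l ≠ 0 → d ≤ ‖l‖ := by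
  obtain ⟨K, hK, hKb⟩ := exists_equivFun_bound B
  refine ⟨K⁻¹, inv_pos.2 hK, ?_⟩
  rintro l ⟨c, rfl⟩ hl
  have hc : ∃ i, c i ≠ 0 := by
    by_contra h
    push_neg at h
    exact hl (by simp [funext h])
  obtain ⟨i, hi⟩ := hc
  have h1 : (1 : ℝ) ≤ |(c i : ℝ)| := by
    rw [← Int.cast_abs]; exact_mod_cast Int.one_le_abs hi
  have h2 : |(c i : ℝ)| ≤ ‖B.equivFun (∑ j, (c j : ℝ) • B j)‖ := by
    rw [equivFun_latticeOf]
    exact (norm_le_pi_norm (fun j => (c j : ℝ)) i).trans_eq' (by simp [Real.norm_eq_abs])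
  have h3 := hKb (∑ j, (c j : ℝ) • B j)
  rw [inv_le_iff_one_le_mul₀ hK]
  nlinarith [norm_nonneg (∑ j, (c j : ℝ) • B j)]

lemma latticeOf_covering (hn : 0 < n) :
    ∃ ρ > 0, ∀ x : EuclideanSpace ℝ (Fin n), ∃ l ∈ latticeOf n B, ‖x - l‖ ≤ ρ := by
  have hpos : 0 < (∑ i, ‖B i‖) / 2 := by
    have : 0 < ∑ i, ‖B i‖ :=
      Finset.sum_pos' (fun i _ => norm_nonneg _)
        ⟨⟨0, hn⟩, Finset.mem_univ _, norm_pos_iff.2 (B.ne_zero _)⟩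
    linarith
  refine ⟨(∑ i, ‖B i‖) / 2, hpos, fun x => ?_⟩
  set c : Fin n → ℝ := B.equivFun x with hc
  refine ⟨∑ i, ((round (c i) : ℤ) : ℝ) • B i, ⟨fun i => round (c i), rfl⟩, ?_⟩
  have hx : x = ∑ i, c i • B i := by
    conv_lhs => rw [← B.equivFun.symm_apply_apply x]
    rw [Module.Basis.equivFun_symm_apply]
  have hsub : x - ∑ i, ((round (c i) : ℤ) : ℝ) • B i
      = ∑ i, (c i - ((round (c i) : ℤ) : ℝ)) • B i := by
    rw [hx, ← Finset.sum_sub_distrib]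
    exact Finset.sum_congr rfl fun i _ => (sub_smul _ _ _).symm
  rw [hsub]
  calc ‖∑ i, (c i - ((round (c i) : ℤ) : ℝ)) • B i‖
      ≤ ∑ i, ‖(c i - ((round (c i) : ℤ) : ℝ)) • B i‖ := norm_sum_le _ _
    _ ≤ ∑ i, (1 / 2) * ‖B i‖ := by
        refine Finset.sum_le_sum fun i _ => ?_
        rw [norm_smul, Real.norm_eq_abs]
        exact mul_le_mul_of_nonneg_right (abs_sub_round (c i)) (norm_nonneg _)
    _ = (∑ i, ‖B i‖) / 2 := by rw [← Finset.mul_sum]; ring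

lemma latticeOf_exists_nearest (x : EuclideanSpace ℝ (Fin n)) :
    ∃ l ∈ latticeOf n B, ∀ m ∈ latticeOf n B, ‖x - l‖ ≤ ‖x - m‖ := by
  obtain ⟨K, hK, hKb⟩ := exists_equivFun_bound B
  set S : Set (EuclideanSpace ℝ (Fin n)) := {l ∈ latticeOf n B | ‖x - l‖ ≤ ‖x‖} with hS
  have h0 : (0 : EuclideanSpace ℝ (Fin n)) ∈ S := ⟨zero_mem_latticeOf B, by simp⟩
  set M : ℝ := K * (2 * ‖x‖) with hM
  have hfin : S.Finite := by
    set T : Set (Fin n → ℤ) := Set.pi Set.univ (fun _ => {z : ℤ | |(z : ℝ)| ≤ M}) with hT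
    have hTfin : T.Finite := by
      refine Set.Finite.pi (fun i => ?_)
      refine Set.Finite.subset (Set.finite_Icc (⌈-M⌉) (⌊M⌋)) ?_
      intro z hz
      rw [Set.mem_setOf_eq, abs_le] at hz
      exact Set.mem_Icc.2
        ⟨Int.ceil_le.2 (by exact_mod_cast hz.1), Int.le_floor.2 (by exact_mod_cast hz.2)⟩
    refine Set.Finite.subset (hTfin.image (fun c => ∑ i, ((c i : ℤ) : ℝ) • B i)) ?_
    rintro l ⟨⟨c, rfl⟩, hl⟩
    refine ⟨c, ?_, rfl⟩
    intro i _
    have hnorm : ‖∑ j, ((c j : ℤ) : ℝ) • B j‖ ≤ 2 * ‖x‖ := by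
      have h1 := norm_sub_norm_le (∑ j, ((c j : ℤ) : ℝ) • B j) x
      rw [norm_sub_rev] at h1
      linarith
    have h2 : |((c i : ℤ) : ℝ)| ≤ ‖B.equivFun (∑ j, ((c j : ℤ) : ℝ) • B j)‖ := by
      rw [equivFun_latticeOf]
      exact (norm_le_pi_norm (fun j => ((c j : ℤ) : ℝ)) i).trans_eq' (by simp [Real.norm_eq_abs])
    have h3 := hKb (∑ j, ((c j : ℤ) : ℝ) • B j)
    rw [Set.mem_setOf_eq]
    calc |((c i : ℤ) : ℝ)| ≤ K * ‖∑ j, ((c j : ℤ) : ℝ) • B j‖ := h2.trans h3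
      _ ≤ M := by rw [hM]; exact mul_le_mul_of_nonneg_left hnorm hK.le
  obtain ⟨l, hlS, hlmin⟩ := Set.exists_min_image S (fun l => ‖x - l‖) hfin ⟨0, h0⟩
  refine ⟨l, hlS.1, fun m hm => ?_⟩
  by_cases hmS : m ∈ S
  · exact hlmin m hmS
  · have h5 : ¬ ‖x - m‖ ≤ ‖x‖ := fun h => hmS ⟨hm, h⟩
    have h4 := hlmin 0 h0
    simp only [sub_zero] at h4
    linarith [not_le.1 h5]

lemma volume_smul_set (a : ℝ) (ha : 0 < a) (S : Set (EuclideanSpace ℝ (Fin n))) :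
    (volume (a • S)).toReal = a ^ n * (volume S).toReal := by
  rw [Measure.addHaar_smul volume a S, ENNReal.toReal_mul, ENNReal.toReal_ofReal (abs_nonneg _),
    finrank_euclideanSpace_fin, abs_of_pos (pow_pos ha n)]

lemma integral_smul_set (a : ℝ) (ha : 0 < a) (S : Set (EuclideanSpace ℝ (Fin n))) :
    (∫ x in a • S, ‖x‖ ^ 2) = a ^ (n + 2) * ∫ x in S, ‖x‖ ^ 2 := by
  have h := Measure.setIntegral_comp_smul_of_pos (μ := volume)
    (fun x : EuclideanSpace ℝ (Fin n) => ‖x‖ ^ 2) S ha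
  simp only [norm_smul, Real.norm_eq_abs, mul_pow, sq_abs] at h
  rw [integral_const_mul, finrank_euclideanSpace_fin, smul_eq_mul] at h
  field_simp at h ⊢
  rw [pow_add]
  linarith [h]

lemma nsm_smul (hn : 0 < n) {a : ℝ} (ha : 0 < a) (S : Set (EuclideanSpace ℝ (Fin n))) :
    nsm n (a • S) = nsm n S := by
  have hnR : (0:ℝ) < n := by exact_mod_cast hn
  unfold nsm
  rw [integral_smul_set a ha S, volume_smul_set a ha S]
  set v := (volume S).toReal with hv
  have hvnn : 0 ≤ v := ENNReal.toReal_nonneg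
  have hp : (a ^ n * v) ^ ((1:ℝ) + 2 / n) = a ^ (n + 2) * v ^ ((1:ℝ) + 2 / n) := by
    rw [Real.mul_rpow (by positivity) hvnn]
    congr 1
    rw [← Real.rpow_natCast a n, ← Real.rpow_mul ha.le, ← Real.rpow_natCast a (n + 2)]
    congr 1
    push_cast
    field_simp
  rw [hp]
  have hre : (n:ℝ) * (a ^ (n + 2) * v ^ ((1:ℝ) + 2 / n))
      = a ^ (n + 2) * ((n:ℝ) * v ^ ((1:ℝ) + 2 / n)) := by ring
  rw [hre, mul_div_mul_left _ _ (by positivity)]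

end Aux

set_option maxHeartbeats 2000000 in
theorem stmt12 (n : ℕ) (hn : 0 < n)
    (B1 B2 : Module.Basis (Fin n) ℝ (EuclideanSpace ℝ (Fin n)))
    (hnest0 : latticeOf n B2 ⊆ latticeOf n B1)
    (ω1 ω2 : ℕ → ℝ) (hω1 : ∀ k, 0 < ω1 k) (hω2 : ∀ k, 0 < ω2 k)
    (hnest : ∀ k, ω2 k • latticeOf n B2 ⊆ ω1 k • latticeOf n B1)
    (hratio : Tendsto (fun k => ω2 k / ω1 k) atTop atTop) :
    Tendsto
      (fun k => nsm n
        (⋃ l ∈ cVor n (ω2 k • latticeOf n B2) ∩ (ω1 k • latticeOf n B1),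
          (l + ·) '' cVor n (ω1 k • latticeOf n B1)))
      atTop (nhds (nsm n (cVor n (latticeOf n B2)))) := by
  classical
  have hnR : (0:ℝ) < n := by exact_mod_cast hn
  obtain ⟨d, hd, hdmin⟩ := latticeOf_min_dist B2
  obtain ⟨ρ₁, hρ₁, hcov1⟩ := latticeOf_covering B1 hn
  obtain ⟨ρ₂, hρ₂, hcov2⟩ := latticeOf_covering B2 hn
  set r : ℝ := d / 2 with hr
  have hrpos : 0 < r := by positivity
  set V₂ : Set (EuclideanSpace ℝ (Fin n)) := cVor n (latticeOf n B2) with hV₂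
  have hball : Metric.closedBall (0 : EuclideanSpace ℝ (Fin n)) r ⊆ V₂ := by
    intro x hx l hl
    rw [Metric.mem_closedBall, dist_zero_right] at hx
    rcases eq_or_ne l 0 with rfl | hl0
    · simp
    · have h1 := hdmin l hl hl0
      have h3 := norm_sub_norm_le l x
      rw [norm_sub_rev] at h3
      linarith
  have hV₂bd : V₂ ⊆ Metric.closedBall 0 ρ₂ := by
    intro x hx
    obtain ⟨l, hl, hld⟩ := hcov2 x
    rw [Metric.mem_closedBall, dist_zero_right]
    exact (hx l hl).trans hld
  have hV₁bd : ∀ y ∈ cVor n (latticeOf n B1), ‖y‖ ≤ ρ₁ := by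
    intro y hy
    obtain ⟨l, hl, hld⟩ := hcov1 y
    exact (hy l hl).trans hld
  have hV₂fin : volume V₂ ≠ ⊤ :=
    ne_top_of_le_ne_top measure_closedBall_lt_top.ne (measure_mono hV₂bd)
  have hvpos : 0 < (volume V₂).toReal := by
    refine ENNReal.toReal_pos ?_ hV₂fin
    refine ne_of_gt (lt_of_lt_of_le ?_ (measure_mono hball))
    exact Metric.measure_closedBall_pos volume 0 hrpos
  set δ : ℕ → ℝ := fun k => (ω1 k / ω2 k) * (ρ₁ / r) with hδ
  have hδpos : ∀ k, 0 < δ k := fun k => mul_pos (div_pos (hω1 k) (hω2 k)) (div_pos hρ₁ hrpos)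
  have hδr : ∀ k, δ k * r = (ω2 k)⁻¹ * (ω1 k * ρ₁) := by
    intro k
    simp only [hδ, hr]
    field_simp [hd.ne', (hω2 k).ne']
  have hδ0 : Tendsto δ atTop (nhds 0) := by
    have h1 : Tendsto (fun k => ω1 k / ω2 k) atTop (nhds 0) := by
      have h2 := hratio.inv_tendsto_atTop
      refine h2.congr fun k => ?_
      rw [Pi.inv_apply, inv_div]
    simpa using h1.mul_const (ρ₁ / r)
  set C : ℕ → Set (EuclideanSpace ℝ (Fin n)) := fun k =>
    ⋃ l ∈ cVor n (ω2 k • latticeOf n B2) ∩ (ω1 k • latticeOf n B1),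
      (l + ·) '' cVor n (ω1 k • latticeOf n B1) with hCdef
  set S : ℕ → Set (EuclideanSpace ℝ (Fin n)) := fun k => (ω2 k)⁻¹ • C k with hSdef
  have hCV2 : ∀ k, cVor n (ω2 k • latticeOf n B2) = ω2 k • V₂ := fun k => smul_cVor (hω2 k)
  -- upper inclusion
  have hU : ∀ k, S k ⊆ (1 + δ k) • V₂ := by
    intro k x hx
    obtain ⟨y, hy, rfl⟩ := hx
    simp only [hCdef, Set.mem_iUnion, Set.mem_image, Set.mem_inter_iff, exists_prop] at hy
    obtain ⟨l, ⟨hl2, hl1⟩, w, hw, rfl⟩ := hy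
    rw [hCV2 k] at hl2
    obtain ⟨z, hz, rfl⟩ := hl2
    have hwn : ‖w‖ ≤ ω1 k * ρ₁ := by
      rw [smul_cVor (hω1 k)] at hw
      obtain ⟨w', hw', rfl⟩ := hw
      rw [norm_smul, Real.norm_eq_abs, abs_of_pos (hω1 k)]
      exact mul_le_mul_of_nonneg_left (hV₁bd w' hw') (hω1 k).le
    set u := (ω2 k)⁻¹ • w with hu
    have hun : ‖u‖ ≤ δ k * r := by
      rw [hu, norm_smul, Real.norm_eq_abs, abs_of_pos (inv_pos.2 (hω2 k)), hδr k]
      exact mul_le_mul_of_nonneg_left hwn (inv_pos.2 (hω2 k)).le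
    have humem : u ∈ δ k • V₂ := by
      refine ⟨(δ k)⁻¹ • u, hball ?_, smul_inv_smul₀ (hδpos k).ne' u⟩
      rw [Metric.mem_closedBall, dist_zero_right, norm_smul, Real.norm_eq_abs,
        abs_of_pos (inv_pos.2 (hδpos k))]
      have h6 : (δ k)⁻¹ * ‖u‖ ≤ (δ k)⁻¹ * (δ k * r) :=
        mul_le_mul_of_nonneg_left hun (inv_nonneg.2 (hδpos k).le)
      rwa [inv_mul_cancel_left₀ (hδpos k).ne'] at h6
    have hxe : (ω2 k)⁻¹ • (ω2 k • z + w) = z + u := by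
      rw [smul_add, inv_smul_smul₀ (hω2 k).ne', hu]
    show (ω2 k)⁻¹ • (ω2 k • z + w) ∈ (1 + δ k) • V₂
    rw [hxe, Convex.add_smul convex_cVor zero_le_one (hδpos k).le, one_smul]
    exact Set.add_mem_add hz humem
  -- lower inclusion
  have hL : ∀ k, δ k < 1 → (1 - δ k) • V₂ ⊆ S k := by
    intro k hδ1 x hx
    obtain ⟨z, hz, rfl⟩ := hx
    set p := ω2 k • ((1 - δ k) • z) with hp
    obtain ⟨l0, hl0, hl0min⟩ := latticeOf_exists_nearest B1 ((ω1 k)⁻¹ • p)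
    obtain ⟨l', hl', hl'd⟩ := hcov1 ((ω1 k)⁻¹ • p)
    have hl0d : ‖(ω1 k)⁻¹ • p - l0‖ ≤ ρ₁ := (hl0min l' hl').trans hl'd
    set l := ω1 k • l0 with hl
    have hlmem : l ∈ ω1 k • latticeOf n B1 := Set.smul_mem_smul_set hl0
    have he2 : p - l = ω1 k • ((ω1 k)⁻¹ • p - l0) := by
      rw [hl, smul_sub, smul_inv_smul₀ (hω1 k).ne']
    have hkey : ∀ m0 ∈ latticeOf n B1, ‖p - l‖ ≤ ‖p - ω1 k • m0‖ := by
      intro m0 hm0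
      have e1 : p - ω1 k • m0 = ω1 k • ((ω1 k)⁻¹ • p - m0) := by
        rw [smul_sub, smul_inv_smul₀ (hω1 k).ne']
      rw [e1, he2, norm_smul, norm_smul, Real.norm_eq_abs, abs_of_pos (hω1 k)]
      exact mul_le_mul_of_nonneg_left (hl0min m0 hm0) (hω1 k).le
    have hpl : ‖p - l‖ ≤ ω1 k * ρ₁ := by
      rw [he2, norm_smul, Real.norm_eq_abs, abs_of_pos (hω1 k)]
      exact mul_le_mul_of_nonneg_left hl0d (hω1 k).le
    have hVor : p - l ∈ cVor n (ω1 k • latticeOf n B1) := by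
      rintro m ⟨m0, hm0, rfl⟩
      have e3 : p - l - ω1 k • m0 = p - ω1 k • (l0 + m0) := by
        rw [hl, smul_add]; abel
      rw [e3]
      exact hkey (l0 + m0) (add_mem_latticeOf B1 hl0 hm0)
    set u := (ω2 k)⁻¹ • (l - p) with hu
    have hun : ‖u‖ ≤ δ k * r := by
      rw [hu, norm_smul, Real.norm_eq_abs, abs_of_pos (inv_pos.2 (hω2 k)), hδr k, norm_sub_rev]
      exact mul_le_mul_of_nonneg_left hpl (inv_pos.2 (hω2 k)).le
    obtain ⟨u', hu'mem, hu'⟩ : ∃ u', u' ∈ V₂ ∧ δ k • u' = u := by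
      refine ⟨(δ k)⁻¹ • u, hball ?_, smul_inv_smul₀ (hδpos k).ne' u⟩
      rw [Metric.mem_closedBall, dist_zero_right, norm_smul, Real.norm_eq_abs,
        abs_of_pos (inv_pos.2 (hδpos k))]
      have h6 : (δ k)⁻¹ * ‖u‖ ≤ (δ k)⁻¹ * (δ k * r) :=
        mul_le_mul_of_nonneg_left hun (inv_nonneg.2 (hδpos k).le)
      rwa [inv_mul_cancel_left₀ (hδpos k).ne'] at h6
    have hlV2 : l ∈ cVor n (ω2 k • latticeOf n B2) := by
      rw [hCV2 k]
      refine ⟨(1 - δ k) • z + δ k • u', ?_, ?_⟩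
      · exact convex_cVor hz hu'mem (by linarith) (hδpos k).le (by ring)
      · rw [hu', hu]
        show ω2 k • ((1 - δ k) • z + (ω2 k)⁻¹ • (l - p)) = l
        rw [smul_add, smul_inv_smul₀ (hω2 k).ne', ← hp, add_sub_cancel]
    have hpC : p ∈ C k := by
      simp only [hCdef]
      refine Set.mem_biUnion ⟨hlV2, hlmem⟩ ?_
      exact ⟨p - l, hVor, add_sub_cancel l p⟩
    refine ⟨p, hpC, ?_⟩
    show (ω2 k)⁻¹ • p = (1 - δ k) • z
    rw [hp, inv_smul_smul₀ (hω2 k).ne']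
  -- measurability (not strictly needed but harmless)
  -- integrability on a big ball
  have hIntBall : IntegrableOn (fun x : EuclideanSpace ℝ (Fin n) => ‖x‖ ^ 2)
      (Metric.closedBall 0 (2 * ρ₂)) volume :=
    (continuous_norm.pow 2).continuousOn.integrableOn_compact (isCompact_closedBall _ _)
  have hsub2 : ∀ k, δ k < 1 → (1 + δ k) • V₂ ⊆ Metric.closedBall 0 (2 * ρ₂) := by
    intro k h1 y hy
    obtain ⟨y', hy', rfl⟩ := hy
    have h2 : ‖y'‖ ≤ ρ₂ := by
      have h4 := hV₂bd hy'
      rwa [Metric.mem_closedBall, dist_zero_right] at h4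
    rw [Metric.mem_closedBall, dist_zero_right, norm_smul, Real.norm_eq_abs,
      abs_of_pos (by linarith [hδpos k] : (0:ℝ) < 1 + δ k)]
    nlinarith [hδpos k, norm_nonneg y']
  have hev : ∀ᶠ k in atTop, δ k < 1 := hδ0.eventually (gt_mem_nhds zero_lt_one)
  -- volume bounds
  have hvolle : ∀ k, (volume (S k)).toReal ≤ (1 + δ k) ^ n * (volume V₂).toReal := by
    intro k
    have h2 : volume ((1 + δ k) • V₂) ≠ ⊤ := by
      rw [Measure.addHaar_smul]
      exact ENNReal.mul_ne_top ENNReal.ofReal_ne_top hV₂fin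
    have h3 := ENNReal.toReal_mono h2 (measure_mono (hU k))
    rwa [volume_smul_set _ (by linarith [hδpos k]) V₂] at h3
  have hSfin : ∀ k, volume (S k) ≠ ⊤ := by
    intro k
    refine ne_top_of_le_ne_top ?_ (measure_mono (hU k))
    rw [Measure.addHaar_smul]
    exact ENNReal.mul_ne_top ENNReal.ofReal_ne_top hV₂fin
  have hvolge : ∀ k, δ k < 1 → (1 - δ k) ^ n * (volume V₂).toReal ≤ (volume (S k)).toReal := by
    intro k h1
    have h3 := ENNReal.toReal_mono (hSfin k) (measure_mono (hL k h1))
    rwa [volume_smul_set _ (by linarith) V₂] at h3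
  have hvolT : Tendsto (fun k => (volume (S k)).toReal) atTop (nhds (volume V₂).toReal) := by
    have hone : Tendsto (fun k => 1 - δ k) atTop (nhds 1) := by
      simpa using tendsto_const_nhds.sub hδ0
    have hone' : Tendsto (fun k => 1 + δ k) atTop (nhds 1) := by
      simpa using tendsto_const_nhds.add hδ0
    have hlo : Tendsto (fun k => (1 - δ k) ^ n * (volume V₂).toReal) atTop
        (nhds (volume V₂).toReal) := by
      simpa using (hone.pow n).mul_const (volume V₂).toReal
    have hhi : Tendsto (fun k => (1 + δ k) ^ n * (volume V₂).toReal) atTop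
        (nhds (volume V₂).toReal) := by
      simpa using (hone'.pow n).mul_const (volume V₂).toReal
    refine tendsto_of_tendsto_of_tendsto_of_le_of_le' hlo hhi ?_ ?_
    · filter_upwards [hev] with k h1 using hvolge k h1
    · filter_upwards with k using hvolle k
  -- integral bounds
  have hIle : ∀ k, δ k < 1 →
      (∫ x in S k, ‖x‖ ^ 2) ≤ (1 + δ k) ^ (n + 2) * ∫ x in V₂, ‖x‖ ^ 2 := by
    intro k h1
    rw [← integral_smul_set (1 + δ k) (by linarith [hδpos k]) V₂]
    exact setIntegral_mono_set (hIntBall.mono_set (hsub2 k h1))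
      (Filter.Eventually.of_forall fun x => sq_nonneg _) ((hU k).eventuallyLE)
  have hIge : ∀ k, δ k < 1 →
      (1 - δ k) ^ (n + 2) * (∫ x in V₂, ‖x‖ ^ 2) ≤ ∫ x in S k, ‖x‖ ^ 2 := by
    intro k h1
    rw [← integral_smul_set (1 - δ k) (by linarith) V₂]
    exact setIntegral_mono_set ((hIntBall.mono_set (hsub2 k h1)).mono_set (hU k))
      (Filter.Eventually.of_forall fun x => sq_nonneg _) ((hL k h1).eventuallyLE)
  have hIT : Tendsto (fun k => ∫ x in S k, ‖x‖ ^ 2) atTop (nhds (∫ x in V₂, ‖x‖ ^ 2)) := by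
    have hone : Tendsto (fun k => 1 - δ k) atTop (nhds 1) := by
      simpa using tendsto_const_nhds.sub hδ0
    have hone' : Tendsto (fun k => 1 + δ k) atTop (nhds 1) := by
      simpa using tendsto_const_nhds.add hδ0
    have hlo : Tendsto (fun k => (1 - δ k) ^ (n + 2) * ∫ x in V₂, ‖x‖ ^ 2) atTop
        (nhds (∫ x in V₂, ‖x‖ ^ 2)) := by
      simpa using (hone.pow (n + 2)).mul_const (∫ x in V₂, ‖x‖ ^ 2)
    have hhi : Tendsto (fun k => (1 + δ k) ^ (n + 2) * ∫ x in V₂, ‖x‖ ^ 2) atTop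
        (nhds (∫ x in V₂, ‖x‖ ^ 2)) := by
      simpa using (hone'.pow (n + 2)).mul_const (∫ x in V₂, ‖x‖ ^ 2)
    refine tendsto_of_tendsto_of_tendsto_of_le_of_le' hlo hhi ?_ ?_
    · filter_upwards [hev] with k h1 using hIge k h1
    · filter_upwards [hev] with k h1 using hIle k h1
  -- assemble
  have hden : Tendsto (fun k => (n : ℝ) * (volume (S k)).toReal ^ ((1:ℝ) + 2 / n)) atTop
      (nhds ((n : ℝ) * (volume V₂).toReal ^ ((1:ℝ) + 2 / n))) :=
    tendsto_const_nhds.mul (hvolT.rpow_const (Or.inl hvpos.ne'))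
  have hdne : ((n : ℝ) * (volume V₂).toReal ^ ((1:ℝ) + 2 / n)) ≠ 0 :=
    ne_of_gt (mul_pos hnR (Real.rpow_pos_of_pos hvpos _))
  have key : Tendsto (fun k => nsm n (S k)) atTop (nhds (nsm n V₂)) := by
    have h7 : nsm n V₂
        = (∫ x in V₂, ‖x‖ ^ 2) / ((n : ℝ) * (volume V₂).toReal ^ ((1:ℝ) + 2 / n)) := rfl
    rw [h7]
    exact hIT.div hden hdne
  have hfinal : ∀ k, nsm n (S k) = nsm n (C k) := by
    intro k
    conv_rhs => rw [← smul_inv_smul₀ (hω2 k).ne' (C k)]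
    exact (nsm_smul hn (hω2 k) _).symm
  have key2 : Tendsto (fun k => nsm n (C k)) atTop (nhds (nsm n V₂)) := key.congr hfinal
  simpa only [hCdef] using key2
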